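/- Let X be a compact T₀ space whose compact open sets form a basis closed under finite unions. If the set of closed points of X is dense in the patch topology of X, then the join-semilattice QC(X) of compact open subsets of X (under union, with bottom ∅ and top X) is join-subfit. -/

import Mathlib

open TopologicalSpace

/-- The patch topology: generated by differences of compact open sets. -/
def patchTopology (X : Type*) [TopologicalSpace X] : TopologicalSpace X :=
  generateFrom {s | ∃ U V : Set X, IsCompact U ∧ IsOpen U ∧ IsCompact V ∧ IsOpen V ∧ s = U \ V}

/-- Compact open sets form a basis. -/
def CompactlyBased (X : Type*) [TopologicalSpace X] : Prop :=
  ∀ U : Set X, IsOpen U → ∀ x ∈ U, ∃ V : Set X, IsCompact V ∧ IsOpen V ∧ x ∈ V ∧ V ⊆ U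

/-- The set of closed points. -/
def closedPts (X : Type*) [TopologicalSpace X] : Set X :=
  {x | IsClosed ({x} : Set X)}

theorem qcop_jsubfit_of_patch_dense {X : Type*} [TopologicalSpace X] [T0Space X]
    [CompactSpace X] (hbase : CompactlyBased X)
    (hunion : ∀ U V : Set X, IsCompact U → IsOpen U → IsCompact V → IsOpen V →
      IsCompact (U ∪ V))
    (hdense : @Dense X (patchTopology X) (closedPts X)) :
    ∀ U V : Set X, IsCompact U → IsOpen U → IsCompact V → IsOpen V → ¬ U ⊆ V →
      ∃ W : Set X, IsCompact W ∧ IsOpen W ∧ U ∪ W = Set.univ ∧ V ∪ W ≠ Set.univ := by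
  intro U V hUc hUo hVc hVo hUV
  -- U \ V is open in the patch topology and nonempty
  have hopen : @IsOpen X (patchTopology X) (U \ V) :=
    TopologicalSpace.isOpen_generateFrom_of_mem ⟨U, V, hUc, hUo, hVc, hVo, rfl⟩
  have hne : (U \ V).Nonempty := Set.diff_nonempty.mpr hUV
  -- get a closed point in U \ V
  obtain ⟨x, hxUV, hxcp⟩ := (@dense_iff_inter_open X (patchTopology X) (closedPts X)).mp
    hdense (U \ V) hopen hne
  have hxcl : IsClosed ({x} : Set X) := hxcp
  -- cover Uᶜ by compact opens missing x
  have hUcc : IsCompact (Uᶜ) := hUo.isClosed_compl.isCompact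
  have hxU : x ∈ U := hxUV.1
  have hxV : x ∉ V := hxUV.2
  have hsub : Uᶜ ⊆ ({x} : Set X)ᶜ := by
    intro y hy
    simp only [Set.mem_compl_iff, Set.mem_singleton_iff]
    rintro rfl; exact hy hxU
  -- choose for each point of ({x})ᶜ a compact open neighborhood inside ({x})ᶜ
  have hchoice : ∀ y : X, y ∈ ({x} : Set X)ᶜ →
      ∃ Wy : Set X, IsCompact Wy ∧ IsOpen Wy ∧ y ∈ Wy ∧ Wy ⊆ ({x} : Set X)ᶜ :=
    fun y hy => hbase _ hxcl.isOpen_compl y hy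
  choose! Wf hWc hWo hWmem hWsub using hchoice
  have hcover : Uᶜ ⊆ ⋃ y ∈ ({x} : Set X)ᶜ, Wf y := by
    intro y hy
    exact Set.mem_biUnion (hsub hy) (hWmem y (hsub hy))
  obtain ⟨t, hts, htfin, htcov⟩ := hUcc.elim_finite_subcover_image
    (fun y hy => hWo y hy) hcover
  refine ⟨⋃ y ∈ t, Wf y, ?_, ?_, ?_, ?_⟩
  · exact htfin.isCompact_biUnion (fun y hy => hWc y (hts hy))
  · exact isOpen_biUnion (fun y hy => hWo y (hts hy))
  · apply Set.eq_univ_of_forall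
    intro z
    by_cases hz : z ∈ U
    · exact Or.inl hz
    · exact Or.inr (htcov hz)
  · intro h
    have hx : x ∈ V ∪ ⋃ y ∈ t, Wf y := h ▸ Set.mem_univ x
    rcases hx with hx | hx
    · exact hxV hx
    · simp only [Set.mem_iUnion] at hx
      obtain ⟨y, hy, hxy⟩ := hx
      exact hWsub y (hts hy) hxy rfl
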